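/- arXiv:1104.2126 — 5 statements merged into one kernel-verified Lean document; each statement's English description precedes it below -/
import Mathlib

section
/- The function u^a(x,t) = (1/√(2πt))·[cos((x−y)²/(2t) − π/4) − cos((x+y)²/(2t) − π/4)], for fixed y > 0, satisfies ∂²u/∂t² = −(1/4)·∂⁴u/∂x⁴ on (0,∞) × (0,∞), together with the boundary conditions u(0,t) = 0 and ∂²u/∂x²|_{x=0} = 0 for all t > 0. -/
open Real

/-- Absorbing solution for the semi-infinite vibrating rod. -/
noncomputable def ua (y x t : ℝ) : ℝ :=
  (Real.sqrt (2 * Real.pi * t))⁻¹ *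
    (Real.cos ((x - y) ^ 2 / (2 * t) - Real.pi / 4) -
      Real.cos ((x + y) ^ 2 / (2 * t) - Real.pi / 4))

/- ### Spatial derivative chain -/

noncomputable def D0 (b t z : ℝ) : ℝ := Real.cos ((z - b)^2/(2*t) - Real.pi/4)
noncomputable def D1 (b t z : ℝ) : ℝ :=
  -(Real.sin ((z - b)^2/(2*t) - Real.pi/4) * ((z - b)/t))
noncomputable def D2 (b t z : ℝ) : ℝ :=
  -(Real.cos ((z - b)^2/(2*t) - Real.pi/4) * ((z - b)/t)^2)
    - Real.sin ((z - b)^2/(2*t) - Real.pi/4) / t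
noncomputable def D3 (b t z : ℝ) : ℝ :=
  Real.sin ((z - b)^2/(2*t) - Real.pi/4) * ((z - b)/t)^3
    - 3 * Real.cos ((z - b)^2/(2*t) - Real.pi/4) * (z - b) / t^2
noncomputable def D4 (b t z : ℝ) : ℝ :=
  Real.cos ((z - b)^2/(2*t) - Real.pi/4) * ((z - b)/t)^4
    + 6 * Real.sin ((z - b)^2/(2*t) - Real.pi/4) * (z - b)^2 / t^3
    - 3 * Real.cos ((z - b)^2/(2*t) - Real.pi/4) / t^2

lemma hphi (b t z : ℝ) (ht : t ≠ 0) :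
    HasDerivAt (fun z : ℝ => (z - b)^2/(2*t) - Real.pi/4) ((z - b)/t) z := by
  have h1 : HasDerivAt (fun z : ℝ => (z - b)^2) (2*(z - b)) z := by
    exact (((hasDerivAt_id z).sub_const b).pow 2).congr_deriv (by simp)
  have h2 := (h1.div_const (2*t)).sub_const (Real.pi/4)
  refine h2.congr_deriv (Eq.symm ?_)
  field_simp

lemma hw (b t z : ℝ) : HasDerivAt (fun z : ℝ => (z - b)/t) (1/t) z := by
  simpa using ((hasDerivAt_id z).sub_const b).div_const t

lemma hD0 (b t z : ℝ) (ht : t ≠ 0) : HasDerivAt (fun z => D0 b t z) (D1 b t z) z := by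
  have := (hphi b t z ht).cos
  refine this.congr_deriv (Eq.symm ?_)
  simp [D1]

lemma hD1 (b t z : ℝ) (ht : t ≠ 0) : HasDerivAt (fun z => D1 b t z) (D2 b t z) z := by
  have := (((hphi b t z ht).sin).mul (hw b t z)).neg
  refine this.congr_deriv (Eq.symm ?_)
  simp only [D2]
  field_simp
  ring

lemma hD2 (b t z : ℝ) (ht : t ≠ 0) : HasDerivAt (fun z => D2 b t z) (D3 b t z) z := by
  have h1 := (((hphi b t z ht).cos).mul ((hw b t z).pow 2)).neg
  have h2 := ((hphi b t z ht).sin).div_const t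
  have := h1.sub h2
  refine this.congr_deriv (Eq.symm ?_)
  simp only [D3, Pi.pow_apply, Pi.mul_apply, Pi.sub_apply, Nat.cast_ofNat, Nat.reduceSub, pow_one]
  field_simp
  ring

lemma hD3 (b t z : ℝ) (ht : t ≠ 0) : HasDerivAt (fun z => D3 b t z) (D4 b t z) z := by
  have h1 := ((hphi b t z ht).sin).mul ((hw b t z).pow 3)
  have h2 : HasDerivAt (fun z : ℝ => 3 * Real.cos ((z - b)^2/(2*t) - Real.pi/4) * (z - b) / t^2)
      ((3 * (-Real.sin ((z - b)^2/(2*t) - Real.pi/4) * ((z - b)/t)) * (z - b)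
        + 3 * Real.cos ((z - b)^2/(2*t) - Real.pi/4) * 1) / t^2) z := by
    exact ((((hphi b t z ht).cos).const_mul 3).mul ((hasDerivAt_id z).sub_const b)).div_const (t^2)
  have := h1.sub h2
  refine this.congr_deriv (Eq.symm ?_)
  simp only [D4, Pi.pow_apply, Pi.mul_apply, Pi.sub_apply, Nat.cast_ofNat, Nat.reduceSub, pow_one]
  field_simp
  ring

lemma ua_eq_D0 (y t : ℝ) :
    (fun z => ua y z t)
      = fun z => (Real.sqrt (2 * Real.pi * t))⁻¹ * (D0 y t z - D0 (-y) t z) := by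
  funext z
  simp [ua, D0, sub_neg_eq_add]

lemma derivX1 (y t : ℝ) (ht : t ≠ 0) :
    deriv (fun z => ua y z t)
      = fun z => (Real.sqrt (2 * Real.pi * t))⁻¹ * (D1 y t z - D1 (-y) t z) := by
  funext z
  rw [ua_eq_D0]
  exact (((hD0 y t z ht).sub (hD0 (-y) t z ht)).const_mul _).deriv

lemma derivX2 (y t : ℝ) (ht : t ≠ 0) :
    deriv (fun z => (Real.sqrt (2 * Real.pi * t))⁻¹ * (D1 y t z - D1 (-y) t z))
      = fun z => (Real.sqrt (2 * Real.pi * t))⁻¹ * (D2 y t z - D2 (-y) t z) := by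
  funext z
  exact (((hD1 y t z ht).sub (hD1 (-y) t z ht)).const_mul _).deriv

lemma derivX3 (y t : ℝ) (ht : t ≠ 0) :
    deriv (fun z => (Real.sqrt (2 * Real.pi * t))⁻¹ * (D2 y t z - D2 (-y) t z))
      = fun z => (Real.sqrt (2 * Real.pi * t))⁻¹ * (D3 y t z - D3 (-y) t z) := by
  funext z
  exact (((hD2 y t z ht).sub (hD2 (-y) t z ht)).const_mul _).deriv

lemma derivX4 (y t : ℝ) (ht : t ≠ 0) :
    deriv (fun z => (Real.sqrt (2 * Real.pi * t))⁻¹ * (D3 y t z - D3 (-y) t z))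
      = fun z => (Real.sqrt (2 * Real.pi * t))⁻¹ * (D4 y t z - D4 (-y) t z) := by
  funext z
  exact (((hD3 y t z ht).sub (hD3 (-y) t z ht)).const_mul _).deriv

lemma iterX4 (y t : ℝ) (ht : t ≠ 0) :
    deriv^[4] (fun z => ua y z t)
      = fun z => (Real.sqrt (2 * Real.pi * t))⁻¹ * (D4 y t z - D4 (-y) t z) := by
  show deriv (deriv (deriv (deriv (fun z => ua y z t)))) = _
  rw [derivX1 y t ht, derivX2 y t ht, derivX3 y t ht, derivX4 y t ht]

lemma iterX2 (y t : ℝ) (ht : t ≠ 0) :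
    deriv^[2] (fun z => ua y z t)
      = fun z => (Real.sqrt (2 * Real.pi * t))⁻¹ * (D2 y t z - D2 (-y) t z) := by
  show deriv (deriv (fun z => ua y z t)) = _
  rw [derivX1 y t ht, derivX2 y t ht]

/- ### Time derivative chain -/

noncomputable def G (s : ℝ) : ℝ := (Real.sqrt (2 * Real.pi * s))⁻¹
noncomputable def T0 (a s : ℝ) : ℝ := G s * Real.cos (a/(2*s) - Real.pi/4)
noncomputable def T1 (a s : ℝ) : ℝ :=
  G s * (a/(2*s^2) * Real.sin (a/(2*s) - Real.pi/4) - Real.cos (a/(2*s) - Real.pi/4)/(2*s))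
noncomputable def T2 (a s : ℝ) : ℝ :=
  G s * ((3/(4*s^2) - a^2/(4*s^4)) * Real.cos (a/(2*s) - Real.pi/4)
    - (3*a/(2*s^3)) * Real.sin (a/(2*s) - Real.pi/4))

lemma hG (s : ℝ) (hs : 0 < s) : HasDerivAt G (-(G s)/(2*s)) s := by
  have hS : 0 < Real.sqrt (2 * Real.pi * s) := Real.sqrt_pos.2 (by positivity)
  have h1 : HasDerivAt (fun s : ℝ => 2 * Real.pi * s) (2 * Real.pi) s := by
    simpa using (hasDerivAt_id s).const_mul (2 * Real.pi)
  have h2 := h1.sqrt (by positivity)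
  have h3 := h2.inv (ne_of_gt hS)
  refine h3.congr_deriv (Eq.symm ?_)
  have hS2 : Real.sqrt (2 * Real.pi * s) ^ 2 = 2 * Real.pi * s :=
    Real.sq_sqrt (by positivity)
  simp only [G]
  rw [eq_div_iff (by positivity), hS2]
  field_simp

lemma hpsi (a s : ℝ) (hs : s ≠ 0) :
    HasDerivAt (fun s : ℝ => a/(2*s) - Real.pi/4) (-a/(2*s^2)) s := by
  have h1 : HasDerivAt (fun s : ℝ => 2*s) 2 s := by simpa using (hasDerivAt_id s).const_mul 2
  have h2 := (hasDerivAt_const s a).div h1 (by simpa using hs)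
  have := h2.sub_const (Real.pi/4)
  refine this.congr_deriv (Eq.symm ?_)
  field_simp
  ring

lemma hT0 (a s : ℝ) (hs : 0 < s) : HasDerivAt (fun s => T0 a s) (T1 a s) s := by
  have := (hG s hs).mul ((hpsi a s (ne_of_gt hs)).cos)
  refine this.congr_deriv (Eq.symm ?_)
  simp only [T1]
  field_simp
  ring

lemma hT1 (a s : ℝ) (hs : 0 < s) : HasDerivAt (fun s => T1 a s) (T2 a s) s := by
  have hs' := ne_of_gt hs
  have hq : HasDerivAt (fun s : ℝ => a/(2*s^2)) (-a/s^3) s := by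
    have h1 : HasDerivAt (fun s : ℝ => 2*s^2) (4*s) s := by
      have := ((hasDerivAt_id s).pow 2).const_mul 2
      norm_num at this
      refine this.congr_deriv (Eq.symm ?_)
      ring
    have := (hasDerivAt_const s a).div h1 (by positivity)
    refine this.congr_deriv (Eq.symm ?_)
    field_simp
    ring
  have hA := hq.mul ((hpsi a s hs').sin)
  have hB : HasDerivAt (fun s : ℝ => Real.cos (a/(2*s) - Real.pi/4)/(2*s))
      ((-Real.sin (a/(2*s) - Real.pi/4) * (-a/(2*s^2)) * (2*s)
        - Real.cos (a/(2*s) - Real.pi/4) * 2) / (2*s)^2) s := by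
    have h1 : HasDerivAt (fun s : ℝ => 2*s) 2 s := by simpa using (hasDerivAt_id s).const_mul 2
    exact ((hpsi a s hs').cos).div h1 (by positivity)
  have hF := hA.sub hB
  have := (hG s hs).mul hF
  refine this.congr_deriv (Eq.symm ?_)
  simp only [T2, Pi.pow_apply, Pi.mul_apply, Pi.sub_apply]
  field_simp
  ring

lemma ua_eq_T0 (y x : ℝ) :
    (fun s => ua y x s) = fun s => T0 ((x - y)^2) s - T0 ((x + y)^2) s := by
  funext s
  simp [ua, T0, G]
  ring

theorem absorbing_solution_rod (y : ℝ) (hy : 0 < y) :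
    (∀ x t : ℝ, 0 < x → 0 < t →
        (deriv^[2] fun s => ua y x s) t =
          -(1 / 4) * (deriv^[4] fun z => ua y z t) x) ∧
    (∀ t : ℝ, 0 < t → ua y 0 t = 0) ∧
    (∀ t : ℝ, 0 < t → (deriv^[2] fun z => ua y z t) 0 = 0) := by
  refine ⟨?_, ?_, ?_⟩
  · intro x t hx ht
    have ht' := ne_of_gt ht
    -- time side
    have hderiv1 : deriv (fun s => ua y x s) =ᶠ[nhds t]
        fun s => T1 ((x - y)^2) s - T1 ((x + y)^2) s := by
      refine Filter.eventuallyEq_of_mem (isOpen_Ioi.mem_nhds ht) (fun s hs => ?_)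
      have h : HasDerivAt (fun s => ua y x s)
          (T1 ((x - y)^2) s - T1 ((x + y)^2) s) s := by
        rw [ua_eq_T0]
        exact (hT0 _ s hs).sub (hT0 _ s hs)
      exact h.deriv
    have hT : (deriv^[2] fun s => ua y x s) t = T2 ((x - y)^2) t - T2 ((x + y)^2) t := by
      show deriv (deriv fun s => ua y x s) t = _
      rw [hderiv1.deriv_eq]
      exact ((hT1 _ t ht).sub (hT1 _ t ht)).deriv
    rw [hT, iterX4 y t ht']
    simp only [T2, G, D4, sub_neg_eq_add]
    have hS : Real.sqrt (2 * Real.pi * t) ≠ 0 :=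
      ne_of_gt (Real.sqrt_pos.2 (by positivity))
    field_simp
    ring
  · intro t ht
    simp only [ua]
    rw [show ((0:ℝ) - y)^2 = (0 + y)^2 by ring]
    simp
  · intro t ht
    rw [iterX2 y t (ne_of_gt ht)]
    simp only [D2]
    norm_num
    right
    ring
end

section
/- For fixed μ > 0 and 0 < ν ≤ 1, the function g(x) = (μ^{ν/2−1}/√2)·e^{−|x|μ^{ν/2}}·cos(|x|μ^{ν/2} − π/4) has Fourier transform ∫_{-∞}^{∞} e^{iβx} g(x) dx = μ^{2ν−1}/(μ^{2ν} + β⁴/4) for every β ∈ ℝ. -/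
open Real MeasureTheory Set Filter

lemma integrableOn_cexp_Ioi' {c : ℂ} (hc : c.re < 0) :
    IntegrableOn (fun x : ℝ => Complex.exp (c * x)) (Ioi (0:ℝ)) := by
  refine Integrable.mono' (exp_neg_integrableOn_Ioi 0 (neg_pos.mpr hc)) ?_ ?_
  · exact (Complex.continuous_exp.comp
      (continuous_const.mul Complex.continuous_ofReal)).aestronglyMeasurable.restrict
  · filter_upwards with x
    rw [Complex.norm_exp]
    simp [Complex.mul_re]

lemma integral_cexp_Ioi' {c : ℂ} (hc : c.re < 0) :
    ∫ x in Ioi (0:ℝ), Complex.exp (c * x) = -c⁻¹ := by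
  have hc0 : c ≠ 0 := fun h => by rw [h] at hc; simp at hc
  have h1 := intervalIntegral_tendsto_integral_Ioi 0 (integrableOn_cexp_Ioi' hc) tendsto_id
  have h2 : Tendsto (fun b : ℝ => ∫ x in (0:ℝ)..b, Complex.exp (c * x)) atTop (nhds (-c⁻¹)) := by
    have key : Tendsto (fun b : ℝ => Complex.exp (c * b)) atTop (nhds 0) := by
      rw [tendsto_zero_iff_norm_tendsto_zero]
      have h3 : Tendsto (fun b : ℝ => Real.exp (c.re * b)) atTop (nhds 0) :=
        Real.tendsto_exp_atBot.comp (Filter.Tendsto.const_mul_atTop_of_neg hc tendsto_id)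
      refine h3.congr fun b => ?_
      rw [Complex.norm_exp]; simp [Complex.mul_re]
    have h4 := (key.sub_const (Complex.exp (c * 0))).div_const c
    simp only [Complex.ofReal_zero, mul_zero, Complex.exp_zero, zero_sub] at h4
    refine Tendsto.congr (fun b => (integral_exp_mul_complex hc0).symm) ?_
    convert h4 using 2
    · simp
    · rw [neg_div, one_div]
  exact tendsto_nhds_unique h1 h2

lemma integrableOn_Iic_of_neg {f : ℝ → ℂ} (hf : IntegrableOn (fun x => f (-x)) (Ioi (0:ℝ))) :
    IntegrableOn f (Iic (0:ℝ)) := by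
  have h_map : ((volume : Measure ℝ).restrict (Ici 0)).map Neg.neg
      = (volume : Measure ℝ).restrict (Iic 0) := by
    conv => rhs; rw [← Measure.map_neg_eq_self (volume : Measure ℝ),
      measurableEmbedding_neg.restrict_map]
    simp
  rw [IntegrableOn, ← h_map, measurableEmbedding_neg.integrable_map_iff]
  exact Iff.mpr integrableOn_Ici_iff_integrableOn_Ioi hf

lemma integral_cexp_line (β : ℝ) {w : ℂ} (hw : w.re < 0) :
    Integrable (fun x : ℝ => Complex.exp (Complex.I * β * x + w * |x|)) ∧
    ∫ x : ℝ, Complex.exp (Complex.I * β * x + w * |x|)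
      = -(w + Complex.I * β)⁻¹ - (w - Complex.I * β)⁻¹ := by
  set F : ℝ → ℂ := fun x => Complex.exp (Complex.I * β * x + w * |x|) with hF
  have hre1 : (Complex.I * β + w).re < 0 := by
    simpa [Complex.add_re, Complex.mul_re] using hw
  have hre2 : (w - Complex.I * β).re < 0 := by
    simpa [Complex.sub_re, Complex.mul_re] using hw
  have hpos : Set.EqOn (fun x : ℝ => Complex.exp ((Complex.I * β + w) * x)) F (Ioi 0) := by
    intro x hx
    simp only [hF]
    rw [abs_of_pos hx]
    congr 1
    ring
  have hneg : Set.EqOn (fun x : ℝ => Complex.exp ((w - Complex.I * β) * x))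
      (fun x => F (-x)) (Ioi 0) := by
    intro x hx
    simp only [hF]
    rw [abs_neg, abs_of_pos hx]
    push_cast
    congr 1
    ring
  have hIoi : IntegrableOn F (Ioi 0) :=
    (integrableOn_cexp_Ioi' hre1).congr_fun hpos measurableSet_Ioi
  have hIic : IntegrableOn F (Iic 0) :=
    integrableOn_Iic_of_neg ((integrableOn_cexp_Ioi' hre2).congr_fun hneg measurableSet_Ioi)
  have hInt : Integrable F := by
    rw [← integrableOn_univ, ← Iic_union_Ioi (a := (0:ℝ))]
    exact hIic.union hIoi
  refine ⟨hInt, ?_⟩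
  have hsplit : ∫ x : ℝ, F x = (∫ x in Iic (0:ℝ), F x) + ∫ x in Ioi (0:ℝ), F x := by
    rw [← compl_Iic]
    exact (integral_add_compl measurableSet_Iic hInt).symm
  have hIoi_val : ∫ x in Ioi (0:ℝ), F x = -(Complex.I * β + w)⁻¹ := by
    rw [← setIntegral_congr_fun measurableSet_Ioi hpos, integral_cexp_Ioi' hre1]
  have hIic_val : ∫ x in Iic (0:ℝ), F x = -(w - Complex.I * β)⁻¹ := by
    have h5 := integral_comp_neg_Iic (0:ℝ) (fun x => F (-x))
    simp only [neg_neg, neg_zero] at h5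
    rw [h5, ← setIntegral_congr_fun measurableSet_Ioi hneg, integral_cexp_Ioi' hre2]
  rw [hsplit, hIoi_val, hIic_val]
  rw [add_comm w (Complex.I * ↑β)]
  ring

theorem fourier_transform_laplace_kernel (μ ν : ℝ) (hμ : 0 < μ) (hν : 0 < ν)
    (hν1 : ν ≤ 1) (β : ℝ) :
    ∫ x : ℝ, Complex.exp (Complex.I * β * x) *
        (((μ ^ (ν / 2 - 1) / Real.sqrt 2) * Real.exp (-|x| * μ ^ (ν / 2)) *
          Real.cos (|x| * μ ^ (ν / 2) - Real.pi / 4) : ℝ) : ℂ) =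
      ((μ ^ (2 * ν - 1) / (μ ^ (2 * ν) + β ^ 4 / 4) : ℝ) : ℂ) := by
  have hμ0 : μ ≠ 0 := hμ.ne'
  set a : ℝ := μ ^ (ν / 2) with ha_def
  have ha : 0 < a := Real.rpow_pos_of_pos hμ _
  have hCa : μ ^ (ν / 2 - 1) = a / μ := by
    rw [ha_def, Real.rpow_sub hμ, Real.rpow_one]
  have ha4 : μ ^ (2 * ν) = a ^ 4 := by
    rw [ha_def, ← Real.rpow_natCast (μ ^ (ν / 2)) 4, ← Real.rpow_mul hμ.le]
    congr 1
    push_cast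
    ring
  have h2ν : μ ^ (2 * ν - 1) = a ^ 4 / μ := by
    rw [Real.rpow_sub hμ, Real.rpow_one, ha4]
  clear_value a
  have hs2 : Real.sqrt 2 * Real.sqrt 2 = 2 := Real.mul_self_sqrt (by norm_num)
  have hs2' : Real.sqrt 2 ≠ 0 := by positivity
  -- real-level simplification of the kernel
  have hg : ∀ x : ℝ, (μ ^ (ν / 2 - 1) / Real.sqrt 2) * Real.exp (-|x| * a) *
      Real.cos (|x| * a - Real.pi / 4)
      = a / (2 * μ) * Real.exp (-|x| * a) * (Real.cos (|x| * a) + Real.sin (|x| * a)) := by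
    intro x
    rw [hCa, Real.cos_sub, Real.cos_pi_div_four, Real.sin_pi_div_four]
    field_simp
  have hμC : (μ : ℂ) ≠ 0 := by exact_mod_cast hμ0
  set z₁ : ℂ := (-1 + Complex.I) * (a : ℂ) with hz₁_def
  set z₂ : ℂ := (-1 - Complex.I) * (a : ℂ) with hz₂_def
  have hz₁ : z₁.re < 0 := by
    simp only [hz₁_def, Complex.mul_re, Complex.add_re, Complex.neg_re, Complex.one_re,
      Complex.I_re, Complex.ofReal_re, Complex.add_im, Complex.neg_im, Complex.one_im,
      Complex.I_im, Complex.ofReal_im]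
    simp; linarith
  have hz₂ : z₂.re < 0 := by
    simp only [hz₂_def, Complex.mul_re, Complex.sub_re, Complex.neg_re, Complex.one_re,
      Complex.I_re, Complex.ofReal_re, Complex.sub_im, Complex.neg_im, Complex.one_im,
      Complex.I_im, Complex.ofReal_im]
    simp; linarith
  obtain ⟨hInt₁, hVal₁⟩ := integral_cexp_line β hz₁
  obtain ⟨hInt₂, hVal₂⟩ := integral_cexp_line β hz₂
  set c₁ : ℂ := (1 - Complex.I) * (a : ℂ) / (4 * μ) with hc₁_def
  set c₂ : ℂ := (1 + Complex.I) * (a : ℂ) / (4 * μ) with hc₂_def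
  have hpt : ∀ x : ℝ, Complex.exp (Complex.I * β * x) *
      (((μ ^ (ν / 2 - 1) / Real.sqrt 2) * Real.exp (-|x| * a) *
        Real.cos (|x| * a - Real.pi / 4) : ℝ) : ℂ)
      = c₁ * Complex.exp (Complex.I * β * x + z₁ * |x|)
        + c₂ * Complex.exp (Complex.I * β * x + z₂ * |x|) := by
    intro x
    rw [hg x]
    have e₁ : Complex.exp (Complex.I * β * x + z₁ * |x|)
        = Complex.exp (Complex.I * β * x) * Complex.exp ((-|x| * a : ℝ) : ℂ) *
          Complex.exp (((|x| * a : ℝ) : ℂ) * Complex.I) := by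
      rw [← Complex.exp_add, ← Complex.exp_add, hz₁_def]
      congr 1
      push_cast
      ring
    have e₂ : Complex.exp (Complex.I * β * x + z₂ * |x|)
        = Complex.exp (Complex.I * β * x) * Complex.exp ((-|x| * a : ℝ) : ℂ) *
          Complex.exp (-(((|x| * a : ℝ) : ℂ) * Complex.I)) := by
      rw [← Complex.exp_add, ← Complex.exp_add, hz₂_def]
      congr 1
      push_cast
      ring
    rw [e₁, e₂, Complex.ofReal_mul, Complex.ofReal_mul, Complex.ofReal_mul,
      Complex.ofReal_add, Complex.ofReal_exp, Complex.ofReal_cos, Complex.ofReal_sin,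
      Complex.cos, Complex.sin, Complex.ofReal_div, Complex.ofReal_mul]
    field_simp
    ring_nf
    rw [hc₁_def, hc₂_def]
    field_simp
    push_cast
    ring_nf
  rw [integral_congr_ae (Filter.Eventually.of_forall hpt),
    integral_add (hInt₁.const_mul c₁) (hInt₂.const_mul c₂),
    MeasureTheory.integral_const_mul, MeasureTheory.integral_const_mul, hVal₁, hVal₂, h2ν, ha4]
  have key : ∀ s : ℂ, s.re = -a → s ≠ 0 := by
    intro s hs h0
    rw [h0] at hs
    simp only [Complex.zero_re] at hs
    linarith
  have h₁ : z₁ + Complex.I * β ≠ 0 := key _ (by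
    simp [hz₁_def, Complex.add_re, Complex.mul_re])
  have h₂ : z₁ - Complex.I * β ≠ 0 := key _ (by
    simp [hz₁_def, Complex.sub_re, Complex.mul_re])
  have h₃ : z₂ + Complex.I * β ≠ 0 := key _ (by
    simp [hz₂_def, Complex.add_re, Complex.mul_re])
  have h₄ : z₂ - Complex.I * β ≠ 0 := key _ (by
    simp [hz₂_def, Complex.sub_re, Complex.mul_re])
  have hden : ((a : ℂ) ^ 4 + (β : ℂ) ^ 4 / 4) ≠ 0 := by
    have hpos : (0 : ℝ) < a ^ 4 + β ^ 4 / 4 := by positivity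
    have : ((a ^ 4 + β ^ 4 / 4 : ℝ) : ℂ) ≠ 0 := by exact_mod_cast hpos.ne'
    push_cast at this
    exact this
  push_cast
  rw [hz₁_def, hz₂_def, hc₁_def, hc₂_def]
  have hI2 : Complex.I ^ 2 = -1 := Complex.I_sq
  have hI4 : Complex.I ^ 4 = 1 := by rw [show (4:ℕ) = 2*2 from rfl, pow_mul, hI2]; norm_num
  have hden3 : ((μ:ℂ) * ((a:ℂ) ^ 4 + (β:ℂ) ^ 4 / 4)) ≠ 0 := mul_ne_zero hμC hden
  rw [div_div]
  rw [hz₁_def] at h₁ h₂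
  rw [hz₂_def] at h₃ h₄
  have h₁' : (a:ℂ) * (-1 + Complex.I) + Complex.I * β ≠ 0 := by rw [mul_comm]; exact h₁
  have h₂' : (a:ℂ) * (-1 + Complex.I) - Complex.I * β ≠ 0 := by rw [mul_comm]; exact h₂
  have h₃' : (a:ℂ) * (-1 - Complex.I) + Complex.I * β ≠ 0 := by rw [mul_comm]; exact h₃
  have h₄' : (a:ℂ) * (-1 - Complex.I) - Complex.I * β ≠ 0 := by rw [mul_comm]; exact h₄
  field_simp
  ring_nf
  simp only [hI2, hI4]
  ring_nf
  have hD : ((a:ℂ) ^ 4 * ↑μ * 4 + (β:ℂ) ^ 4 * ↑μ) ≠ 0 := by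
    have he : ((a:ℂ) ^ 4 * ↑μ * 4 + (β:ℂ) ^ 4 * ↑μ) = 4 * (↑μ * (↑a ^ 4 + ↑β ^ 4 / 4)) := by ring
    rw [he]
    exact mul_ne_zero (by norm_num) hden3
  have hD' : ((a:ℂ) ^ 4 * 4 + (β:ℂ) ^ 4) ≠ 0 := by
    have he : ((a:ℂ) ^ 4 * 4 + (β:ℂ) ^ 4) = 4 * ((a:ℂ) ^ 4 + (β:ℂ) ^ 4 / 4) := by ring
    rw [he]
    exact mul_ne_zero (by norm_num) hden
  field_simp
  ring
end

section
/- For each n ≥ 1, the n-fold density of the Fresnel pseudo-process satisfies the consistency (marginalization) property: integrating (2π)^{−n/2}·(∏_{j=1}^n (t_j−t_{j−1})^{−1/2})·cos(Σ_{j=1}^n (x_j−x_{j−1})²/(2(t_j−t_{j−1})) − nπ/4) over x_n ∈ ℝ yields the corresponding (n−1)-fold density (2π)^{−(n−1)/2}·(∏_{j=1}^{n−1}(t_j−t_{j−1})^{−1/2})·cos(Σ_{j=1}^{n−1}(x_j−x_{j−1})²/(2(t_j−t_{j−1})) − (n−1)π/4). -/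
open Real Filter intervalIntegral
open MeasureTheory Set Topology

lemma my_exp_norm_le {b : ℂ} (hb : 0 < b.re) (x : ℝ) :
    ‖Complex.exp (-b * (x:ℂ) ^ 2)‖ ≤ 1 := by
  rw [Complex.norm_exp, Real.exp_le_one_iff]
  have h : (-b * (x:ℂ) ^ 2).re = -(b.re * x ^ 2) := by
    simp only [Complex.neg_re, Complex.neg_im, Complex.mul_re, Complex.mul_im,
      ← Complex.ofReal_pow, Complex.ofReal_re, Complex.ofReal_im]
    ring
  rw [h]
  exact neg_nonpos.mpr (by positivity)

lemma my_norm_two_mul {b : ℂ} (x : ℝ) (hx : 0 < x) :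
    ‖2 * b * (x:ℂ)‖ = 2 * ‖b‖ * x := by
  rw [norm_mul, norm_mul]
  simp [Complex.norm_real, abs_of_pos hx]

lemma my_tail_bound {b : ℂ} (hb : 0 < b.re) {A : ℝ} (hA : 0 < A) :
    ‖∫ x in Set.Ioi A, Complex.exp (-b * x ^ 2)‖ ≤ 1 / (‖b‖ * A) := by
  have hb0 : b ≠ 0 := fun h => by simp [h] at hb
  have hbn : (0:ℝ) < ‖b‖ := norm_pos_iff.mpr hb0
  set f : ℝ → ℂ := fun x => Complex.exp (-b * x ^ 2) * (-(2 * b * x))⁻¹ with hf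
  set g : ℝ → ℂ := fun x => Complex.exp (-b * x ^ 2) * (2 * b * (x:ℂ) ^ 2)⁻¹ with hg
  have hderiv : ∀ x ∈ Set.Ici A, HasDerivAt f (Complex.exp (-b * x ^ 2) + g x) x := by
    intro x hx
    have hx0 : (0:ℝ) < x := lt_of_lt_of_le hA hx
    have hxC : (x:ℂ) ≠ 0 := by exact_mod_cast ne_of_gt hx0
    have hlin : HasDerivAt (fun z : ℂ => -(2 * b * z)) (-(2 * b)) (x:ℂ) := by
      have h := ((hasDerivAt_id (x:ℂ)).const_mul (2*b)).neg
      simp only [id, mul_one] at h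
      exact h
    have hne : -(2 * b * (x:ℂ)) ≠ 0 := by
      simp only [neg_ne_zero]
      exact mul_ne_zero (mul_ne_zero two_ne_zero hb0) hxC
    have hinv := hlin.inv hne
    have he : HasDerivAt (fun z : ℂ => Complex.exp (-b * z ^ 2))
        (Complex.exp (-b * (x:ℂ) ^ 2) * (-b * (2 * (x:ℂ) ^ 1))) (x:ℂ) :=
      (((hasDerivAt_pow 2 (x:ℂ)).const_mul (-b))).cexp
    have hne' : (2 * b * (x:ℂ)) ≠ 0 := neg_ne_zero.mp hne
    have hval : Complex.exp (-b * (x:ℂ) ^ 2) * (-b * (2 * (x:ℂ) ^ 1)) * (-(2 * b * (x:ℂ)))⁻¹ +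
        Complex.exp (-b * (x:ℂ) ^ 2) * (- -(2 * b) / (-(2 * b * (x:ℂ))) ^ 2)
        = Complex.exp (-b * (x:ℂ) ^ 2) + g x := by
      simp only [hg]
      have e1 : (-b * (2 * (x:ℂ) ^ 1)) = -(2 * b * (x:ℂ)) := by ring
      rw [e1, mul_assoc, mul_inv_cancel₀ hne, mul_one, neg_neg, neg_sq]
      congr 1
      field_simp [hb0, hxC]
    have hmul := (he.mul hinv).comp_ofReal
    simp only [Pi.inv_apply] at hmul
    rw [hval] at hmul
    exact hmul
  have hnormf : ∀ x : ℝ, 0 < x → ‖f x‖ ≤ (2 * ‖b‖ * x)⁻¹ := by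
    intro x hx
    have h2 : ‖(-(2 * b * (x:ℂ)))⁻¹‖ = (2 * ‖b‖ * x)⁻¹ := by
      rw [norm_inv, norm_neg, my_norm_two_mul x hx]
    calc ‖f x‖ = ‖Complex.exp (-b * (x:ℂ) ^ 2)‖ * ‖(-(2 * b * (x:ℂ)))⁻¹‖ := norm_mul _ _
      _ ≤ 1 * (2 * ‖b‖ * x)⁻¹ := by rw [h2]; gcongr; exact my_exp_norm_le hb x
      _ = (2 * ‖b‖ * x)⁻¹ := one_mul _
  have htends : Tendsto f atTop (𝓝 0) := by
    have hb1 : ∀ᶠ x : ℝ in atTop, ‖f x‖ ≤ (2 * ‖b‖ * x)⁻¹ := by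
      filter_upwards [eventually_gt_atTop 0] with x hx
      exact hnormf x hx
    have hb2 : Tendsto (fun x : ℝ => (2 * ‖b‖ * x)⁻¹) atTop (𝓝 0) :=
      Tendsto.comp tendsto_inv_atTop_zero (Tendsto.const_mul_atTop (by positivity) tendsto_id)
    exact squeeze_zero_norm' hb1 hb2
  have hIexp : IntegrableOn (fun x : ℝ => Complex.exp (-b * x ^ 2)) (Set.Ioi A) :=
    (integrable_cexp_neg_mul_sq hb).integrableOn
  have hbound_int : IntegrableOn (fun x : ℝ => (2 * ‖b‖)⁻¹ * x ^ (-2:ℝ)) (Set.Ioi A) :=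
    (integrableOn_Ioi_rpow_of_lt (by norm_num) hA).const_mul _
  have hgbound : ∀ x ∈ Set.Ioi A, ‖g x‖ ≤ (2 * ‖b‖)⁻¹ * x ^ (-2:ℝ) := by
    intro x hx
    have hx0 : (0:ℝ) < x := lt_trans hA hx
    have h2 : ‖(2 * b * (x:ℂ) ^ 2)⁻¹‖ = (2 * ‖b‖)⁻¹ * (x ^ 2)⁻¹ := by
      rw [show (2 * b * (x:ℂ) ^ 2) = (2 * b) * ((x ^ 2 : ℝ) : ℂ) by push_cast; ring]
      rw [norm_inv, norm_mul, norm_mul, mul_inv]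
      simp [Complex.norm_real, abs_of_pos (show (0:ℝ) < x ^ 2 by positivity)]
    have h3 : x ^ (-2:ℝ) = (x ^ 2)⁻¹ := by
      rw [Real.rpow_neg hx0.le, ← Real.rpow_natCast x 2]
      norm_num
    rw [h3]
    calc ‖g x‖ = ‖Complex.exp (-b * (x:ℂ) ^ 2)‖ * ‖(2 * b * (x:ℂ) ^ 2)⁻¹‖ := norm_mul _ _
      _ ≤ 1 * ((2 * ‖b‖)⁻¹ * (x ^ 2)⁻¹) := by rw [h2]; gcongr; exact my_exp_norm_le hb x
      _ = (2 * ‖b‖)⁻¹ * (x ^ 2)⁻¹ := one_mul _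
  have hgmeas : AEStronglyMeasurable g (volume.restrict (Set.Ioi A)) := by
    apply ContinuousOn.aestronglyMeasurable _ measurableSet_Ioi
    apply ContinuousOn.mul
    · exact (Complex.continuous_exp.comp (by fun_prop)).continuousOn
    · apply ContinuousOn.inv₀ (by fun_prop)
      intro x hx
      have hx0 : (0:ℝ) < x := lt_trans hA hx
      have hxC : (x:ℂ) ≠ 0 := by exact_mod_cast ne_of_gt hx0
      exact mul_ne_zero (mul_ne_zero two_ne_zero hb0) (pow_ne_zero 2 hxC)
  have hIg : IntegrableOn g (Set.Ioi A) := by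
    apply Integrable.mono' hbound_int hgmeas
    filter_upwards [ae_restrict_mem measurableSet_Ioi] with x hx
    exact hgbound x hx
  have key := integral_Ioi_of_hasDerivAt_of_tendsto' hderiv (hIexp.add hIg) htends
  rw [integral_add hIexp hIg, zero_sub] at key
  have hexp_eq : (∫ x in Set.Ioi A, Complex.exp (-b * x ^ 2))
      = -f A - ∫ x in Set.Ioi A, g x := by linear_combination key
  rw [hexp_eq]
  have hInt_g : ‖∫ x in Set.Ioi A, g x‖ ≤ (2 * ‖b‖)⁻¹ * A⁻¹ := by
    have h := norm_integral_le_of_norm_le hbound_int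
      (by filter_upwards [ae_restrict_mem measurableSet_Ioi] with x hx; exact hgbound x hx)
    apply le_trans h
    rw [MeasureTheory.integral_const_mul, integral_Ioi_rpow_of_lt (by norm_num) hA]
    rw [show (-2:ℝ) + 1 = -1 by norm_num, Real.rpow_neg_one]
    rw [div_neg, neg_div, neg_neg, div_one]
  calc ‖-f A - ∫ x in Set.Ioi A, g x‖ ≤ ‖-f A‖ + ‖∫ x in Set.Ioi A, g x‖ := norm_sub_le _ _
    _ = ‖f A‖ + ‖∫ x in Set.Ioi A, g x‖ := by rw [norm_neg]
    _ ≤ (2 * ‖b‖ * A)⁻¹ + (2 * ‖b‖)⁻¹ * A⁻¹ := add_le_add (hnormf A hA) hInt_g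
    _ = 1 / (‖b‖ * A) := by field_simp; ring

lemma my_two_sided {b : ℂ} (hb : 0 < b.re) {A1 A2 : ℝ} (h1 : 0 < A1) (h2 : 0 < A2) :
    ‖(∫ x in (-A1)..A2, Complex.exp (-b * x ^ 2)) - (↑π / b) ^ (1/2 : ℂ)‖ ≤
      1 / (‖b‖ * A1) + 1 / (‖b‖ * A2) := by
  have hint : Integrable (fun x : ℝ => Complex.exp (-b * x ^ 2)) := integrable_cexp_neg_mul_sq hb
  have htot : (∫ x : ℝ, Complex.exp (-b * x ^ 2)) = (↑π / b) ^ (1/2 : ℂ) :=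
    integral_gaussian_complex hb
  have hIic : (∫ x in Set.Iic (-A1), Complex.exp (-b * x ^ 2))
      = ∫ x in Set.Ioi A1, Complex.exp (-b * x ^ 2) := by
    rw [← integral_comp_neg_Ioi]
    apply setIntegral_congr_fun measurableSet_Ioi
    intro x _
    norm_num
  have hsplit : (∫ x in (-A1)..A2, Complex.exp (-b * x ^ 2))
      = (∫ x : ℝ, Complex.exp (-b * x ^ 2))
        - (∫ x in Set.Ioi A1, Complex.exp (-b * x ^ 2))
        - (∫ x in Set.Ioi A2, Complex.exp (-b * x ^ 2)) := by
    rw [← intervalIntegral.integral_Iic_add_Ioi (b := A2) hint.integrableOn hint.integrableOn]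
    rw [← intervalIntegral.integral_Iic_sub_Iic hint.integrableOn hint.integrableOn, hIic]
    ring
  rw [hsplit, htot]
  have : (↑π / b) ^ (1/2 : ℂ) - (∫ x in Set.Ioi A1, Complex.exp (-b * x ^ 2))
        - (∫ x in Set.Ioi A2, Complex.exp (-b * x ^ 2)) - (↑π / b) ^ (1/2 : ℂ)
      = -((∫ x in Set.Ioi A1, Complex.exp (-b * x ^ 2))
          + (∫ x in Set.Ioi A2, Complex.exp (-b * x ^ 2))) := by ring
  rw [this, norm_neg]
  exact le_trans (norm_add_le _ _) (add_le_add (my_tail_bound hb h1) (my_tail_bound hb h2))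

lemma my_fresnel_bound {c : ℝ} (hc : 0 < c) {A1 A2 : ℝ} (h1 : 0 < A1) (h2 : 0 < A2) :
    ‖(∫ x in (-A1)..A2, Complex.exp (Complex.I * c * x ^ 2)) - (↑π * Complex.I / c) ^ (1/2 : ℂ)‖
      ≤ 1 / (c * A1) + 1 / (c * A2) := by
  set l : Filter ℝ := 𝓝[>] (0:ℝ) with hl
  set b : ℝ → ℂ := fun ε => ((ε : ℂ) - Complex.I) * (c : ℂ) with hb
  have hbre : ∀ ε : ℝ, 0 < ε → 0 < (b ε).re := by
    intro ε hε
    simp only [hb, Complex.mul_re, Complex.sub_re, Complex.ofReal_re, Complex.I_re,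
      Complex.sub_im, Complex.ofReal_im, Complex.I_im, Complex.ofReal_re, Complex.ofReal_im]
    simp
    positivity
  have hbnorm : ∀ ε : ℝ, c ≤ ‖b ε‖ := by
    intro ε
    have h1' : ‖b ε‖ = ‖(ε : ℂ) - Complex.I‖ * c := by
      rw [hb]
      simp only [norm_mul, Complex.norm_real, Real.norm_eq_abs, abs_of_pos hc]
    rw [h1']
    have h2' : (1:ℝ) ≤ ‖(ε : ℂ) - Complex.I‖ := by
      have := Complex.abs_im_le_norm ((ε : ℂ) - Complex.I)
      simp only [Complex.sub_im, Complex.ofReal_im, Complex.I_im, zero_sub, abs_neg, abs_one]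
        at this
      exact this
    nlinarith
  -- the two functions of ε
  have hFG : ∀ ε : ℝ, 0 < ε →
      ‖(∫ x in (-A1)..A2, Complex.exp (-(b ε) * x ^ 2)) - (↑π / (b ε)) ^ (1/2 : ℂ)‖
        ≤ 1 / (c * A1) + 1 / (c * A2) := by
    intro ε hε
    refine le_trans (my_two_sided (hbre ε hε) h1 h2) ?_
    have hbpos : (0:ℝ) < ‖b ε‖ := lt_of_lt_of_le hc (hbnorm ε)
    gcongr <;> [exact hbnorm ε; exact hbnorm ε]
  -- limit of integrals
  have hF : Tendsto (fun ε : ℝ => ∫ x in (-A1)..A2, Complex.exp (-(b ε) * x ^ 2)) l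
      (𝓝 (∫ x in (-A1)..A2, Complex.exp (Complex.I * c * x ^ 2))) := by
    apply intervalIntegral.tendsto_integral_filter_of_dominated_convergence (fun _ => (1:ℝ))
    · filter_upwards with ε
      apply Continuous.aestronglyMeasurable
      fun_prop
    · filter_upwards [self_mem_nhdsWithin] with ε (hε : 0 < ε)
      filter_upwards with x
      intro _
      have hre : (-(b ε) * (x:ℂ) ^ 2).re = -(ε * c * x ^ 2) := by
        have heq : -(b ε) * (x:ℂ) ^ 2
            = Complex.ofReal (-(ε * c * x ^ 2)) + Complex.ofReal (c * x ^ 2) * Complex.I := by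
          simp only [hb]; push_cast; ring
        rw [heq, Complex.add_re, Complex.ofReal_re, Complex.mul_re, Complex.ofReal_re,
          Complex.ofReal_im, Complex.I_re, Complex.I_im]
        ring
      rw [Complex.norm_exp, hre]
      exact Real.exp_le_one_iff.mpr (neg_nonpos.mpr (by positivity))
    · exact intervalIntegrable_const
    · filter_upwards with x
      intro _
      have hcont : Continuous (fun ε : ℝ => Complex.exp (-(b ε) * x ^ 2)) := by fun_prop
      have ht : Tendsto (fun ε : ℝ => Complex.exp (-(b ε) * (x:ℂ) ^ 2)) l
          (𝓝 (Complex.exp (-(b 0) * (x:ℂ) ^ 2))) :=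
        (hcont.tendsto 0).mono_left nhdsWithin_le_nhds
      have hval0 : -(b 0) * (x:ℂ) ^ 2 = Complex.I * ↑c * ↑x ^ 2 := by
        simp only [hb, Complex.ofReal_zero]
        ring
      rwa [hval0] at ht
  -- limit of gaussian values
  have hcC : ((c : ℝ) : ℂ) ≠ 0 := by exact_mod_cast ne_of_gt hc
  have hG : Tendsto (fun ε : ℝ => (↑π / (b ε)) ^ (1/2 : ℂ)) l
      (𝓝 ((↑π * Complex.I / c) ^ (1/2 : ℂ))) := by
    have hval : (↑π : ℂ) / (b 0) = ↑π * Complex.I / c := by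
      have hb00 : b 0 = -Complex.I * (c : ℂ) := by simp [hb]
      rw [hb00, div_eq_div_iff (mul_ne_zero (neg_ne_zero.mpr Complex.I_ne_zero) hcC) hcC]
      linear_combination (↑π * (c:ℂ)) * Complex.I_sq
    have hmem : (↑π * Complex.I / c : ℂ) ∈ Complex.slitPlane := by
      rw [Complex.mem_slitPlane_iff]
      right
      rw [show (↑π * Complex.I / c : ℂ) = ((π / c : ℝ) : ℂ) * Complex.I by push_cast; field_simp]
      have him : ((((π / c : ℝ)) : ℂ) * Complex.I).im = π / c := by simp
      rw [him]
      positivity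
    have hb0ne : b 0 ≠ 0 := by
      have hb00 : b 0 = -Complex.I * (c : ℂ) := by simp [hb]
      rw [hb00]
      exact mul_ne_zero (neg_ne_zero.mpr Complex.I_ne_zero) hcC
    have hcont : ContinuousAt (fun ε : ℝ => (↑π : ℂ) / (b ε)) 0 := by
      apply ContinuousAt.div
      · exact continuousAt_const
      · fun_prop
      · exact hb0ne
    have hcomp : Tendsto (fun ε : ℝ => (↑π / (b ε)) ^ (1/2 : ℂ)) l
        (𝓝 ((↑π / (b 0)) ^ (1/2 : ℂ))) :=
      ((hcont.cpow continuousAt_const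
        (by rw [hval]; exact hmem)).tendsto).mono_left nhdsWithin_le_nhds
    rw [hval] at hcomp
    exact hcomp
  have hne : l.NeBot := nhdsGT_neBot 0
  have hlim := (hF.sub hG).norm
  apply le_of_tendsto hlim
  filter_upwards [self_mem_nhdsWithin] with ε (hε : 0 < ε)
  exact hFG ε hε

lemma my_sqrt_val {c : ℝ} (hc : 0 < c) :
    ((↑π * Complex.I / ↑c : ℂ) ^ (1/2 : ℂ))
      = (Real.sqrt (π / c) : ℂ) * Complex.exp (↑(π/4) * Complex.I) := by
  have hpc : (0:ℝ) < π / c := by positivity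
  have hzeq : (↑π * Complex.I / ↑c : ℂ) = ((π / c : ℝ) : ℂ) * Complex.I := by
    push_cast; field_simp
  have hz : (↑π * Complex.I / ↑c : ℂ) ≠ 0 := by
    rw [hzeq]
    exact mul_ne_zero (by exact_mod_cast ne_of_gt hpc) Complex.I_ne_zero
  rw [Complex.cpow_def_of_ne_zero hz]
  have hlog : Complex.log (↑π * Complex.I / ↑c) = ((Real.log (π / c) : ℝ) : ℂ) + ↑(π/2) * Complex.I := by
    apply Complex.ext
    · rw [Complex.log_re]
      have habs : ‖(↑π * Complex.I / ↑c : ℂ)‖ = π / c := by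
        rw [hzeq, norm_mul, Complex.norm_I, Complex.norm_real, Real.norm_eq_abs, abs_of_pos hpc, mul_one]
      rw [habs]
      simp [Complex.add_re, Complex.mul_re]
    · rw [Complex.log_im]
      have harg : Complex.arg (↑π * Complex.I / ↑c) = π / 2 := by
        rw [hzeq, Complex.arg_real_mul _ hpc, Complex.arg_I]
      rw [harg]
      simp [Complex.add_im, Complex.mul_im]
  rw [hlog]
  rw [show ((((Real.log (π / c) : ℝ)) : ℂ) + ↑(π/2) * Complex.I) * (1/2 : ℂ)
      = (((Real.log (π / c) * (1/2) : ℝ)) : ℂ) + ↑(π/4) * Complex.I by push_cast; ring]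
  rw [Complex.exp_add, ← Complex.ofReal_exp]
  congr 2
  rw [Real.sqrt_eq_rpow, Real.rpow_def_of_pos hpc]

lemma my_fresnel_cos (c a θ : ℝ) (hc : 0 < c) :
    Tendsto (fun A : ℝ => ∫ u in (-A)..A, Real.cos (θ + c * (u - a) ^ 2)) atTop
      (𝓝 (Real.sqrt (π / c) * Real.cos (θ + π/4))) := by
  set L : ℂ := (↑π * Complex.I / ↑c) ^ (1/2 : ℂ) with hL
  set g : ℝ → ℂ := fun A => ∫ v in (-(A + a))..(A - a), Complex.exp (Complex.I * c * v ^ 2)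
    with hg
  have hgL : Tendsto g atTop (𝓝 L) := by
    have hkey : Tendsto (fun A => g A - L) atTop (𝓝 0) := by
      have hub : ∀ᶠ A : ℝ in atTop,
          ‖g A - L‖ ≤ 1 / (c * (A + a)) + 1 / (c * (A - a)) := by
        filter_upwards [eventually_gt_atTop |a|] with A hA
        have h1 : 0 < A + a := by
          have := neg_abs_le a; linarith
        have h2 : 0 < A - a := by
          have := le_abs_self a; linarith
        exact my_fresnel_bound hc h1 h2
      refine squeeze_zero_norm' hub ?_
      have t1 : Tendsto (fun A : ℝ => c * (A + a)) atTop atTop :=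
        Tendsto.const_mul_atTop hc (tendsto_atTop_add_const_right atTop a tendsto_id)
      have t2 : Tendsto (fun A : ℝ => c * (A - a)) atTop atTop := by
        have := Tendsto.const_mul_atTop hc (tendsto_atTop_add_const_right atTop (-a) tendsto_id)
        simpa [sub_eq_add_neg] using this
      have h1' := Tendsto.comp tendsto_inv_atTop_zero t1
      have h2' := Tendsto.comp tendsto_inv_atTop_zero t2
      simpa [one_div, Function.comp] using h1'.add h2'
    have := hkey.add_const L
    simpa using this
  have heq : ∀ A : ℝ, (∫ u in (-A)..A, Real.cos (θ + c * (u - a) ^ 2))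
      = (Complex.exp (↑θ * Complex.I) * g A).re := by
    intro A
    have h1 : (∫ u in (-A)..A, Real.cos (θ + c * (u - a) ^ 2))
        = ∫ v in (-A - a)..(A - a), Real.cos (θ + c * v ^ 2) := by
      rw [← intervalIntegral.integral_comp_sub_right (fun v => Real.cos (θ + c * v ^ 2)) a]
    have h2 : ∀ v : ℝ, Real.cos (θ + c * v ^ 2)
        = (Complex.exp (↑θ * Complex.I) * Complex.exp (Complex.I * ↑c * ↑v ^ 2)).re := by
      intro v
      rw [← Complex.exp_add,
        show (↑θ * Complex.I + Complex.I * ↑c * ↑v ^ 2) = ↑(θ + c * v ^ 2) * Complex.I by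
          push_cast; ring,
        Complex.exp_ofReal_mul_I_re]
    have hintg : IntervalIntegrable (fun v : ℝ => Complex.exp (Complex.I * ↑c * ↑v ^ 2))
        MeasureTheory.volume (-A - a) (A - a) := (Continuous.intervalIntegrable (by fun_prop) _ _)
    calc (∫ u in (-A)..A, Real.cos (θ + c * (u - a) ^ 2))
        = ∫ v in (-A - a)..(A - a), Real.cos (θ + c * v ^ 2) := h1
      _ = ∫ v in (-A - a)..(A - a),
            (Complex.exp (↑θ * Complex.I) * Complex.exp (Complex.I * ↑c * ↑v ^ 2)).re := by
          simp_rw [h2]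
      _ = (∫ v in (-A - a)..(A - a),
            Complex.exp (↑θ * Complex.I) * Complex.exp (Complex.I * ↑c * ↑v ^ 2)).re := by
          exact Complex.reCLM.intervalIntegral_comp_comm (hintg.const_mul _)
      _ = (Complex.exp (↑θ * Complex.I) * ∫ v in (-A - a)..(A - a),
            Complex.exp (Complex.I * ↑c * ↑v ^ 2)).re := by
          rw [intervalIntegral.integral_const_mul]
      _ = (Complex.exp (↑θ * Complex.I) * g A).re := by
          rw [hg, show (-A - a) = -(A + a) by ring]
  have hfinal : Tendsto (fun A => (Complex.exp (↑θ * Complex.I) * g A).re) atTop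
      (𝓝 ((Complex.exp (↑θ * Complex.I) * L).re)) :=
    (Complex.continuous_re.tendsto _).comp (tendsto_const_nhds.mul hgL)
  have hval : (Complex.exp (↑θ * Complex.I) * L).re
      = Real.sqrt (π / c) * Real.cos (θ + π/4) := by
    rw [hL, my_sqrt_val hc]
    rw [show Complex.exp (↑θ * Complex.I)
          * ((Real.sqrt (π / c) : ℂ) * Complex.exp (↑(π/4) * Complex.I))
        = (Real.sqrt (π / c) : ℂ) * Complex.exp (↑(θ + π/4) * Complex.I) by
      rw [Complex.ofReal_add, add_mul, Complex.exp_add]; ring]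
    rw [Complex.re_ofReal_mul, Complex.exp_ofReal_mul_I_re]
  rw [← hval]
  exact Tendsto.congr (fun A => (heq A).symm) hfinal

lemma my_fresnel_cos' (dd a S N : ℝ) (hdd : 0 < dd) :
    Tendsto (fun A : ℝ => ∫ u in (-A)..A, Real.cos (S + (u - a) ^ 2 / (2 * dd) - N)) atTop
      (𝓝 (Real.sqrt (2 * π * dd) * Real.cos (S - N + π/4))) := by
  have h := my_fresnel_cos ((2 * dd)⁻¹) a (S - N) (by positivity)
  have harg : ∀ u : ℝ, S + (u - a) ^ 2 / (2 * dd) - N = (S - N) + (2 * dd)⁻¹ * (u - a) ^ 2 :=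
    fun u => by ring
  simp_rw [harg]
  rwa [show π / (2 * dd)⁻¹ = 2 * π * dd by field_simp] at h

theorem fresnel_pseudo_process_consistency
    (n : ℕ) (hn : 1 ≤ n) (t x : ℕ → ℝ)
    (ht0 : t 0 = 0) (hmono : ∀ j < n, t j < t (j + 1)) (hx0 : x 0 = 0) :
    Tendsto (fun A : ℝ =>
        ∫ xn in (-A)..A,
          (2 * Real.pi) ^ (-(n : ℝ) / 2) *
            (∏ j ∈ Finset.range n, (Real.sqrt (t (j + 1) - t j))⁻¹) *
            Real.cos
              ((∑ j ∈ Finset.range (n - 1),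
                  (x (j + 1) - x j) ^ 2 / (2 * (t (j + 1) - t j))) +
                (xn - x (n - 1)) ^ 2 / (2 * (t n - t (n - 1))) -
                n * Real.pi / 4))
      atTop
      (nhds
        ((2 * Real.pi) ^ (-((n : ℝ) - 1) / 2) *
          (∏ j ∈ Finset.range (n - 1), (Real.sqrt (t (j + 1) - t j))⁻¹) *
          Real.cos
            ((∑ j ∈ Finset.range (n - 1),
                (x (j + 1) - x j) ^ 2 / (2 * (t (j + 1) - t j))) -
              ((n : ℝ) - 1) * Real.pi / 4))) := by
  obtain ⟨m, rfl⟩ : ∃ m, n = m + 1 := ⟨n - 1, by omega⟩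
  have hd : 0 < t (m + 1) - t m := sub_pos.mpr (hmono m (by omega))
  simp only [Nat.add_sub_cancel]
  simp only [intervalIntegral.integral_const_mul]
  have main := (my_fresnel_cos' (t (m + 1) - t m) (x m)
      (∑ j ∈ Finset.range m, (x (j + 1) - x j) ^ 2 / (2 * (t (j + 1) - t j)))
      (((m + 1 : ℕ) : ℝ) * Real.pi / 4) hd).const_mul
      ((2 * Real.pi) ^ (-(((m + 1 : ℕ)) : ℝ) / 2)
        * ∏ j ∈ Finset.range (m + 1), (Real.sqrt (t (j + 1) - t j))⁻¹)
  have hval : ((2 * Real.pi) ^ (-(((m + 1 : ℕ)) : ℝ) / 2)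
        * ∏ j ∈ Finset.range (m + 1), (Real.sqrt (t (j + 1) - t j))⁻¹)
        * (Real.sqrt (2 * π * (t (m + 1) - t m))
          * Real.cos ((∑ j ∈ Finset.range m, (x (j + 1) - x j) ^ 2 / (2 * (t (j + 1) - t j)))
              - ((m + 1 : ℕ) : ℝ) * Real.pi / 4 + π / 4))
      = (2 * Real.pi) ^ (-(((m + 1 : ℕ) : ℝ) - 1) / 2) *
          (∏ j ∈ Finset.range m, (Real.sqrt (t (j + 1) - t j))⁻¹) *
          Real.cos ((∑ j ∈ Finset.range m, (x (j + 1) - x j) ^ 2 / (2 * (t (j + 1) - t j)))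
              - (((m + 1 : ℕ) : ℝ) - 1) * Real.pi / 4) := by
    have hcos : (∑ j ∈ Finset.range m, (x (j + 1) - x j) ^ 2 / (2 * (t (j + 1) - t j)))
          - ((m + 1 : ℕ) : ℝ) * Real.pi / 4 + π / 4
        = (∑ j ∈ Finset.range m, (x (j + 1) - x j) ^ 2 / (2 * (t (j + 1) - t j)))
          - (((m + 1 : ℕ) : ℝ) - 1) * Real.pi / 4 := by push_cast; ring
    rw [hcos]
    have hsqrt : Real.sqrt (2 * π * (t (m + 1) - t m))
        = Real.sqrt (2 * π) * Real.sqrt (t (m + 1) - t m) :=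
      Real.sqrt_mul (by positivity) _
    have hprod : (∏ j ∈ Finset.range (m + 1), (Real.sqrt (t (j + 1) - t j))⁻¹)
        = (∏ j ∈ Finset.range m, (Real.sqrt (t (j + 1) - t j))⁻¹)
          * (Real.sqrt (t (m + 1) - t m))⁻¹ :=
      Finset.prod_range_succ _ _
    have hsd : Real.sqrt (t (m + 1) - t m) ≠ 0 := ne_of_gt (Real.sqrt_pos.mpr hd)
    have hpow : (2 * Real.pi) ^ (-(((m + 1 : ℕ)) : ℝ) / 2) * Real.sqrt (2 * π)
        = (2 * Real.pi) ^ (-(((m + 1 : ℕ) : ℝ) - 1) / 2) := by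
      rw [Real.sqrt_eq_rpow, ← Real.rpow_add (by positivity)]
      congr 1
      push_cast
      ring
    rw [hprod, hsqrt, ← hpow]
    linear_combination ((2 * Real.pi) ^ (-(((m + 1 : ℕ)) : ℝ) / 2)
      * (∏ j ∈ Finset.range m, (Real.sqrt (t (j + 1) - t j))⁻¹)
      * Real.sqrt (2 * π)
      * Real.cos ((∑ j ∈ Finset.range m, (x (j + 1) - x j) ^ 2 / (2 * (t (j + 1) - t j)))
          - (((m + 1 : ℕ) : ℝ) - 1) * Real.pi / 4)) * inv_mul_cancel₀ hsd
  rw [← hval]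
  exact main
end

section
/- For every t > 0 and x ∈ ℝ: ∫_0^∞ (1/√(2πs))·cos(x²/(2s) − π/4)·(t·e^{−t²/(2s)}/√(2πs³)) ds = (t/(π√2))·(t² + x²)/(t⁴ + x⁴). -/
open Real MeasureTheory Filter Set Topology

private lemma fresnel_aux_tendsto_exp (a : ℝ) (ha : 0 < a) :
    Tendsto (fun s : ℝ => Real.exp (-(a * (2 * s)⁻¹))) (𝓝[>] (0:ℝ)) (𝓝 0) := by
  have h2 : Tendsto (fun s : ℝ => 2 * s) (𝓝[>] (0:ℝ)) (𝓝[>] (0:ℝ)) := by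
    apply tendsto_nhdsWithin_of_tendsto_nhds_of_eventually_within
    · have hc : Continuous (fun s : ℝ => 2 * s) := continuous_const.mul continuous_id
      have := hc.tendsto (0:ℝ)
      simpa using this.mono_left nhdsWithin_le_nhds
    · filter_upwards [self_mem_nhdsWithin] with s hs
      exact mul_pos two_pos (Set.mem_Ioi.mp hs)
  have h1 : Tendsto (fun s : ℝ => (2 * s)⁻¹) (𝓝[>] (0:ℝ)) atTop :=
    tendsto_inv_nhdsGT_zero.comp h2
  have h3 : Tendsto (fun s : ℝ => a * (2 * s)⁻¹) (𝓝[>] (0:ℝ)) atTop :=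
    h1.const_mul_atTop ha
  exact Real.tendsto_exp_neg_atTop_nhds_zero.comp h3

private lemma fresnel_aux_cwa (g : ℝ → ℝ) (h0 : g 0 = 0)
    (hneg : ∀ s ≤ (0:ℝ), g s = 0) (h : Tendsto g (𝓝[>] (0:ℝ)) (𝓝 0)) :
    ContinuousWithinAt g (Set.Ici (0:ℝ)) 0 := by
  rw [ContinuousWithinAt, h0]
  have hle : 𝓝[Set.Ici (0:ℝ)] 0 ≤ 𝓝[Set.Iic (0:ℝ)] 0 ⊔ 𝓝[Set.Ioi (0:ℝ)] 0 := by
    rw [← nhdsWithin_union]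
    apply nhdsWithin_mono
    intro y hy
    rcases le_or_gt y 0 with h'|h'
    · exact Or.inl h'
    · exact Or.inr h'
  refine Filter.Tendsto.mono_left ?_ hle
  rw [Filter.tendsto_sup]
  constructor
  · apply Filter.Tendsto.congr' _ tendsto_const_nhds
    filter_upwards [self_mem_nhdsWithin] with y hy
    exact (hneg y hy).symm
  · exact h

theorem fresnel_at_passage_time_density (t x : ℝ) (ht : 0 < t) :
    ∫ s in Set.Ioi (0 : ℝ),
        (Real.sqrt (2 * Real.pi * s))⁻¹ * Real.cos (x ^ 2 / (2 * s) - Real.pi / 4) *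
          (t * Real.exp (-t ^ 2 / (2 * s)) / Real.sqrt (2 * Real.pi * s ^ 3)) =
      (t / (Real.pi * Real.sqrt 2)) * ((t ^ 2 + x ^ 2) / (t ^ 4 + x ^ 4)) := by
  have hπ := Real.pi_pos
  set a := t ^ 2 with ha_def
  set b := x ^ 2 with hb_def
  have ha : 0 < a := by positivity
  have hb : 0 ≤ b := sq_nonneg x
  set D := t ^ 4 + x ^ 4 with hD_def
  have hD : 0 < D := by positivity
  have hDab : D = a ^ 2 + b ^ 2 := by rw [hD_def, ha_def, hb_def]; ring
  set c := Real.pi / 4 with hc_def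
  set Φ : ℝ → ℝ := fun u =>
    Real.exp (-(a * u)) * (b * Real.sin (b * u - c) - a * Real.cos (b * u - c)) / D with hΦ_def
  -- derivative of Φ
  have hΦderiv : ∀ u : ℝ, HasDerivAt Φ (Real.exp (-(a * u)) * Real.cos (b * u - c)) u := by
    intro u
    have h1 : HasDerivAt (fun u : ℝ => -(a * u)) (-a) u := by
      simpa using (((hasDerivAt_id u).const_mul a).fun_neg)
    have h2 := h1.exp
    have h3 : HasDerivAt (fun u : ℝ => b * u - c) b u := by
      simpa using (((hasDerivAt_id u).const_mul b).sub_const c)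
    have h4 := h3.sin
    have h5 := h3.cos
    have h6 := ((h2.mul ((h4.const_mul b).fun_sub (h5.const_mul a))).div_const D)
    refine h6.congr_deriv ?_
    rw [hDab]
    have hD' : (0:ℝ) < a ^ 2 + b ^ 2 := hDab ▸ hD
    field_simp
    ring
  -- continuity of Φ
  have hΦcont : Continuous Φ := by
    rw [hΦ_def]; fun_prop
  -- bound for Φ
  have hΦbound : ∀ u : ℝ, |Φ u| ≤ ((a + b) / D) * Real.exp (-(a * u)) := by
    intro u
    have htrig : |b * Real.sin (b * u - c) - a * Real.cos (b * u - c)| ≤ a + b := by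
      calc |b * Real.sin (b * u - c) - a * Real.cos (b * u - c)|
          ≤ |b * Real.sin (b * u - c)| + |a * Real.cos (b * u - c)| := by
            rw [sub_eq_add_neg]
            exact (abs_add_le _ _).trans (by rw [abs_neg])
        _ = b * |Real.sin (b * u - c)| + a * |Real.cos (b * u - c)| := by
            rw [abs_mul, abs_mul, abs_of_nonneg hb, abs_of_nonneg ha.le]
        _ ≤ b * 1 + a * 1 := by
            gcongr
            · exact Real.abs_sin_le_one _
            · exact Real.abs_cos_le_one _
        _ = a + b := by ring
    rw [hΦ_def]
    simp only
    rw [abs_div, abs_mul, abs_of_pos (Real.exp_pos _), abs_of_pos hD]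
    rw [div_le_iff₀ hD]
    calc Real.exp (-(a * u)) * |b * Real.sin (b * u - c) - a * Real.cos (b * u - c)|
        ≤ Real.exp (-(a * u)) * (a + b) := by gcongr
      _ = (a + b) / D * Real.exp (-(a * u)) * D := by field_simp
  set f : ℝ → ℝ := fun s => if 0 < s then -(t / Real.pi) * Φ ((2 * s)⁻¹) else 0 with hf_def
  set F : ℝ → ℝ := fun s =>
    (Real.sqrt (2 * Real.pi * s))⁻¹ * Real.cos (x ^ 2 / (2 * s) - Real.pi / 4) *
      (t * Real.exp (-t ^ 2 / (2 * s)) / Real.sqrt (2 * Real.pi * s ^ 3)) with hF_def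
  -- key algebraic identity
  have key : ∀ s : ℝ, 0 < s → F s =
      -(t / Real.pi) * (Real.exp (-(a * (2 * s)⁻¹)) * Real.cos (b * (2 * s)⁻¹ - c) *
        -(2 / (2 * s) ^ 2)) := by
    intro s hs
    have hsq : Real.sqrt (2 * Real.pi * s) * Real.sqrt (2 * Real.pi * s ^ 3)
        = 2 * Real.pi * s ^ 2 := by
      rw [← Real.sqrt_mul (by positivity)]
      have h : (2 * Real.pi * s) * (2 * Real.pi * s ^ 3) = (2 * Real.pi * s ^ 2) ^ 2 := by ring
      rw [h, Real.sqrt_sq (by positivity)]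
    have h1 : x ^ 2 / (2 * s) - Real.pi / 4 = b * (2 * s)⁻¹ - c := by
      rw [hb_def, hc_def, div_eq_mul_inv]
    have h2 : -t ^ 2 / (2 * s) = -(a * (2 * s)⁻¹) := by
      rw [ha_def, neg_div, div_eq_mul_inv]
    rw [hF_def]
    simp only
    rw [h1, h2]
    have hs1 : Real.sqrt (2 * Real.pi * s) ≠ 0 := by positivity
    have hs2 : Real.sqrt (2 * Real.pi * s ^ 3) ≠ 0 := by positivity
    rw [div_eq_mul_inv]
    rw [show (Real.sqrt (2 * Real.pi * s))⁻¹ * Real.cos (b * (2 * s)⁻¹ - c) *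
        (t * Real.exp (-(a * (2 * s)⁻¹)) * (Real.sqrt (2 * Real.pi * s ^ 3))⁻¹)
        = t * Real.exp (-(a * (2 * s)⁻¹)) * Real.cos (b * (2 * s)⁻¹ - c) *
          (Real.sqrt (2 * Real.pi * s) * Real.sqrt (2 * Real.pi * s ^ 3))⁻¹ by
      rw [mul_inv]; ring]
    rw [hsq]
    field_simp
  -- derivative of f on Ioi 0
  have hderiv : ∀ s ∈ Set.Ioi (0:ℝ), HasDerivAt f (F s) s := by
    intro s hs
    rw [Set.mem_Ioi] at hs
    have h2s : (2 * s) ≠ 0 := by positivity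
    have hinv : HasDerivAt (fun s : ℝ => (2 * s)⁻¹) (-(2 / (2 * s) ^ 2)) s := by
      have h := (((hasDerivAt_id s).const_mul (2:ℝ)).inv h2s)
      refine h.congr_deriv ?_
      simp only [id_eq]
      ring
    have hcomp := ((hΦderiv ((2 * s)⁻¹)).comp s hinv).const_mul (-(t / Real.pi))
    have heq : f =ᶠ[𝓝 s] fun s => -(t / Real.pi) * Φ ((2 * s)⁻¹) := by
      filter_upwards [lt_mem_nhds hs] with y hy
      rw [hf_def]
      simp only [if_pos hy]
    rw [key s hs]
    exact HasDerivAt.congr_of_eventuallyEq hcomp heq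
  -- majorant integrability
  have hmaj : IntegrableOn
      (fun s : ℝ => (s ^ 2)⁻¹ * Real.exp (-(a * (2 * s)⁻¹))) (Set.Ioi 0) := by
    set G : ℝ → ℝ := fun s => if 0 < s then (2 / a) * Real.exp (-(a * (2 * s)⁻¹)) else 0
      with hG_def
    have hGd : ∀ s ∈ Set.Ioi (0:ℝ), HasDerivAt G
        ((s ^ 2)⁻¹ * Real.exp (-(a * (2 * s)⁻¹))) s := by
      intro s hs
      rw [Set.mem_Ioi] at hs
      have h2s : (2 * s) ≠ 0 := by positivity
      have hinv : HasDerivAt (fun s : ℝ => (2 * s)⁻¹) (-(2 / (2 * s) ^ 2)) s := by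
        have h := (((hasDerivAt_id s).const_mul (2:ℝ)).inv h2s)
        refine h.congr_deriv ?_
        simp only [id_eq]
        ring
      have hin : HasDerivAt (fun s : ℝ => -(a * (2 * s)⁻¹))
          (-(a * -(2 / (2 * s) ^ 2))) s := by
        exact ((hinv.const_mul a).neg)
      have hexp := (hin.exp).const_mul (2 / a)
      have heq : G =ᶠ[𝓝 s] fun s => (2 / a) * Real.exp (-(a * (2 * s)⁻¹)) := by
        filter_upwards [lt_mem_nhds hs] with y hy
        rw [hG_def]; simp only [if_pos hy]
      have := HasDerivAt.congr_of_eventuallyEq hexp heq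
      refine this.congr_deriv ?_
      have hs' : s ≠ 0 := hs.ne'
      field_simp
    have hGpos : ∀ s ∈ Set.Ioi (0:ℝ), 0 ≤ (s ^ 2)⁻¹ * Real.exp (-(a * (2 * s)⁻¹)) := by
      intro s hs; positivity
    have hGtend : Tendsto G atTop (𝓝 (2 / a)) := by
      have h1 : Tendsto (fun s : ℝ => (2 * s)⁻¹) atTop (𝓝 0) := by
        apply tendsto_inv_atTop_zero.comp
        exact (tendsto_id.const_mul_atTop two_pos)
      have h2 : Tendsto (fun s : ℝ => (2 / a) * Real.exp (-(a * (2 * s)⁻¹))) atTop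
          (𝓝 ((2 / a) * Real.exp (-(a * 0)))) := by
        exact (((Real.continuous_exp.comp
          ((continuous_const.mul continuous_id).neg)).tendsto 0).comp h1).const_mul _
      have h3 : (2 / a) * Real.exp (-(a * 0)) = 2 / a := by simp
      rw [h3] at h2
      apply h2.congr'
      filter_upwards [eventually_gt_atTop (0:ℝ)] with y hy
      rw [hG_def]; simp only [if_pos hy]
    have hGcont : ContinuousWithinAt G (Set.Ici (0:ℝ)) 0 := by
      apply fresnel_aux_cwa
      · rw [hG_def]; simp
      · intro s hs; rw [hG_def]; simp [not_lt.mpr hs]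
      · have := (fresnel_aux_tendsto_exp a ha).const_mul (2 / a)
        rw [mul_zero] at this
        apply this.congr'
        filter_upwards [self_mem_nhdsWithin] with y hy
        rw [hG_def]; simp only [if_pos (Set.mem_Ioi.mp hy)]
    exact integrableOn_Ioi_deriv_of_nonneg hGcont hGd hGpos hGtend
  -- F is integrable
  have hFint : IntegrableOn F (Set.Ioi 0) := by
    have hmaj' : IntegrableOn
        (fun s : ℝ => (t / (2 * Real.pi)) * ((s ^ 2)⁻¹ * Real.exp (-(a * (2 * s)⁻¹))))
        (Set.Ioi 0) := hmaj.const_mul _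
    apply Integrable.mono hmaj'
    · apply ContinuousOn.aestronglyMeasurable _ measurableSet_Ioi
      rw [hF_def]
      have hc2s : ∀ s ∈ Set.Ioi (0:ℝ), (2 * s) ≠ 0 := fun s hs => by
        have h0 : (0:ℝ) < s := hs; positivity
      have h1 : ContinuousOn (fun s : ℝ => (Real.sqrt (2 * Real.pi * s))⁻¹) (Set.Ioi 0) :=
        ContinuousOn.inv₀ (Real.continuous_sqrt.comp_continuousOn (by fun_prop))
          (fun s hs => by have h0 : (0:ℝ) < s := hs; positivity)
      have h2 : ContinuousOn (fun s : ℝ => Real.cos (x ^ 2 / (2 * s) - Real.pi / 4))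
          (Set.Ioi 0) :=
        Real.continuous_cos.comp_continuousOn
          ((continuousOn_const.div (by fun_prop) hc2s).sub continuousOn_const)
      have h3 : ContinuousOn
          (fun s : ℝ => t * Real.exp (-t ^ 2 / (2 * s)) / Real.sqrt (2 * Real.pi * s ^ 3))
          (Set.Ioi 0) := by
        apply ContinuousOn.div
        · exact continuousOn_const.mul (Real.continuous_exp.comp_continuousOn
            (continuousOn_const.div (by fun_prop) hc2s))
        · exact Real.continuous_sqrt.comp_continuousOn (by fun_prop)
        · intro s hs
          have h0 : (0:ℝ) < s := hs
          positivity
      exact (h1.mul h2).mul h3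
    · rw [ae_restrict_iff' measurableSet_Ioi]
      filter_upwards with s hs
      rw [Set.mem_Ioi] at hs
      rw [key s hs]
      have hrw : -(t / Real.pi) * (Real.exp (-(a * (2 * s)⁻¹)) * Real.cos (b * (2 * s)⁻¹ - c) *
          -(2 / (2 * s) ^ 2))
          = (t / (2 * Real.pi)) * ((s ^ 2)⁻¹ * Real.exp (-(a * (2 * s)⁻¹)))
            * Real.cos (b * (2 * s)⁻¹ - c) := by
        have hs' : s ≠ 0 := hs.ne'
        field_simp
      rw [hrw, Real.norm_eq_abs, Real.norm_eq_abs, abs_mul]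
      calc |(t / (2 * Real.pi)) * ((s ^ 2)⁻¹ * Real.exp (-(a * (2 * s)⁻¹)))|
            * |Real.cos (b * (2 * s)⁻¹ - c)|
          ≤ |(t / (2 * Real.pi)) * ((s ^ 2)⁻¹ * Real.exp (-(a * (2 * s)⁻¹)))| * 1 := by
            gcongr; exact Real.abs_cos_le_one _
        _ ≤ |(t / (2 * Real.pi)) * ((s ^ 2)⁻¹ * Real.exp (-(a * (2 * s)⁻¹)))| := by
            rw [mul_one]
  -- limit of f at infinity
  set m := -(t / Real.pi) * Φ 0 with hm_def
  have htend : Tendsto f atTop (𝓝 m) := by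
    have h1 : Tendsto (fun s : ℝ => (2 * s)⁻¹) atTop (𝓝 0) := by
      apply tendsto_inv_atTop_zero.comp
      exact (tendsto_id.const_mul_atTop two_pos)
    have h2 : Tendsto (fun s : ℝ => -(t / Real.pi) * Φ ((2 * s)⁻¹)) atTop (𝓝 m) := by
      rw [hm_def]
      exact ((hΦcont.tendsto 0).comp h1).const_mul _
    apply h2.congr'
    filter_upwards [eventually_gt_atTop (0:ℝ)] with y hy
    rw [hf_def]; simp only [if_pos hy]
  -- continuity of f at 0 from the right
  have hcont : ContinuousWithinAt f (Set.Ici (0:ℝ)) 0 := by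
    apply fresnel_aux_cwa
    · rw [hf_def]; simp
    · intro s hs; rw [hf_def]; simp [not_lt.mpr hs]
    · have hb0 : Tendsto (fun s : ℝ => ((a + b) / D) * Real.exp (-(a * (2 * s)⁻¹)))
          (𝓝[>] (0:ℝ)) (𝓝 0) := by
        have := (fresnel_aux_tendsto_exp a ha).const_mul ((a + b) / D)
        rwa [mul_zero] at this
      have h0 : Tendsto (fun s : ℝ => -(t / Real.pi) * Φ ((2 * s)⁻¹)) (𝓝[>] (0:ℝ)) (𝓝 0) := by
        have hsq : Tendsto (fun s : ℝ => Φ ((2 * s)⁻¹)) (𝓝[>] (0:ℝ)) (𝓝 0) := by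
          apply squeeze_zero_norm _ hb0
          intro s
          rw [Real.norm_eq_abs]
          exact hΦbound _
        have := hsq.const_mul (-(t / Real.pi))
        rwa [mul_zero] at this
      apply h0.congr'
      filter_upwards [self_mem_nhdsWithin] with y hy
      rw [hf_def]; simp only [if_pos (Set.mem_Ioi.mp hy)]
  have main := integral_Ioi_of_hasDerivAt_of_tendsto hcont hderiv hFint htend
  have hf0 : f 0 = 0 := by rw [hf_def]; simp
  rw [hf0, sub_zero] at main
  -- final computation
  have hΦ0 : Φ 0 = -((a + b) * (Real.sqrt 2 / 2)) / D := by
    rw [hΦ_def]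
    simp only [mul_zero, neg_zero, zero_sub, Real.exp_zero, one_mul, Real.sin_neg, Real.cos_neg,
      hc_def, Real.sin_pi_div_four, Real.cos_pi_div_four]
    ring
  have hm : m = (t / (Real.pi * Real.sqrt 2)) * ((t ^ 2 + x ^ 2) / (t ^ 4 + x ^ 4)) := by
    rw [hm_def, hΦ0, ← ha_def, ← hb_def, ← hD_def]
    have hs2 : Real.sqrt 2 ≠ 0 := by positivity
    have h2 : Real.sqrt 2 * Real.sqrt 2 = 2 := Real.mul_self_sqrt (by norm_num)
    field_simp
    linear_combination h2
  rw [← hm]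
  exact main
end

section
/- For every x ∈ ℝ and t > 0, the series (1/(π√(2t)))·Σ_{m=0}^∞ (1/m!)·(−√2|x|/√t)^m · cos((m+1)π/4)·sin((m+1)π/2)·Γ((m+1)/2) equals (1/√(2πt))·cos(x²/(2t) − π/4). -/
open Real

private lemma gamma_nat_add_half (n : ℕ) :
    Real.Gamma ((n : ℝ) + 1/2) =
      Real.sqrt Real.pi * (Nat.factorial (2*n)) / (4^n * Nat.factorial n) := by
  induction n with
  | zero =>
    rw [show ((0:ℕ):ℝ) + 1/2 = 1/2 by norm_num, Real.Gamma_one_half_eq]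
    simp
  | succ n ih =>
    have hne : (n : ℝ) + 1/2 ≠ 0 := by positivity
    have h1 : ((n+1 : ℕ) : ℝ) + 1/2 = ((n:ℝ) + 1/2) + 1 := by push_cast; ring
    rw [h1, Real.Gamma_add_one hne, ih]
    have h2 : (Nat.factorial (2*(n+1)) : ℝ) =
        (2*(n:ℝ)+2)*(2*(n:ℝ)+1)*Nat.factorial (2*n) := by
      have h : 2*(n+1) = (2*n+1)+1 := by ring
      rw [h, Nat.factorial_succ, Nat.factorial_succ]; push_cast; ring
    have h3 : (Nat.factorial (n+1) : ℝ) = ((n:ℝ)+1)*Nat.factorial n := by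
      rw [Nat.factorial_succ]; push_cast; ring
    rw [h2, h3]
    have hf : (Nat.factorial n : ℝ) ≠ 0 := Nat.cast_ne_zero.mpr n.factorial_ne_zero
    have hf2 : (Nat.factorial (2*n) : ℝ) ≠ 0 :=
      Nat.cast_ne_zero.mpr (2*n).factorial_ne_zero
    have h4 : (4:ℝ)^n ≠ 0 := by positivity
    field_simp
    ring

private noncomputable def fres (x t : ℝ) (m : ℕ) : ℝ :=
  (1 / Nat.factorial m : ℝ) * (-Real.sqrt 2 * |x| / Real.sqrt t) ^ m *
    Real.cos ((m + 1) * Real.pi / 4) * Real.sin ((m + 1) * Real.pi / 2) *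
    Real.Gamma ((m + 1) / 2)

private lemma fres_sq (x t : ℝ) (ht : 0 < t) :
    (-Real.sqrt 2 * |x| / Real.sqrt t) ^ 2 = 4 * (x^2/(2*t)) := by
  have h2 : (Real.sqrt 2)^2 = 2 := Real.sq_sqrt (by norm_num)
  have htq : (Real.sqrt t)^2 = t := Real.sq_sqrt ht.le
  have hts : Real.sqrt t ≠ 0 := ne_of_gt (Real.sqrt_pos.mpr ht)
  have h : (-Real.sqrt 2 * |x| / Real.sqrt t) ^ 2
      = (Real.sqrt 2)^2 * |x|^2 / (Real.sqrt t)^2 := by ring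
  rw [h, h2, htq, sq_abs]
  field_simp
  ring

private lemma fres_odd (x t : ℝ) (k : ℕ) : fres x t (2*k+1) = 0 := by
  have harg : (((2*k+1:ℕ):ℝ)+1)*Real.pi/2 = ((k+1:ℕ):ℝ)*Real.pi := by
    push_cast; ring
  unfold fres
  rw [harg, Real.sin_nat_mul_pi]
  ring

private lemma fres_even (x t : ℝ) (ht : 0 < t) (k : ℕ) :
    fres x t (2*(2*k)) = Real.sqrt (2*Real.pi)/2 *
      ((-1)^k * (x^2/(2*t))^(2*k) / Nat.factorial (2*k)) := by
  have harg1 : (((2*(2*k):ℕ):ℝ)+1)*Real.pi/4 = Real.pi/4 + (k:ℝ)*Real.pi := by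
    push_cast; ring
  have harg2 : (((2*(2*k):ℕ):ℝ)+1)*Real.pi/2 = Real.pi/2 + (k:ℝ)*(2*Real.pi) := by
    push_cast; ring
  have harg3 : (((2*(2*k):ℕ):ℝ)+1)/2 = ((2*k:ℕ):ℝ) + 1/2 := by
    push_cast; ring
  unfold fres
  rw [harg1, harg2, harg3, Real.cos_add_nat_mul_pi, Real.cos_pi_div_four,
    Real.sin_add_nat_mul_two_pi, Real.sin_pi_div_two, gamma_nat_add_half,
    pow_mul, fres_sq x t ht, mul_pow,
    Real.sqrt_mul (by norm_num : (0:ℝ) ≤ 2) Real.pi]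
  have hf1 : (Nat.factorial (2*(2*k)) : ℝ) ≠ 0 :=
    Nat.cast_ne_zero.mpr (2*(2*k)).factorial_ne_zero
  have hf2 : (Nat.factorial (2*k) : ℝ) ≠ 0 :=
    Nat.cast_ne_zero.mpr (2*k).factorial_ne_zero
  have h4 : (4:ℝ)^(2*k) ≠ 0 := by positivity
  field_simp

private lemma fres_even_odd (x t : ℝ) (ht : 0 < t) (k : ℕ) :
    fres x t (2*(2*k+1)) = Real.sqrt (2*Real.pi)/2 *
      ((-1)^k * (x^2/(2*t))^(2*k+1) / Nat.factorial (2*k+1)) := by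
  have hc : Real.cos (3*Real.pi/4) = -(Real.sqrt 2/2) := by
    rw [show 3*Real.pi/4 = Real.pi - Real.pi/4 by ring, Real.cos_pi_sub,
      Real.cos_pi_div_four]
  have hs : Real.sin (3*Real.pi/2) = -1 := by
    rw [show 3*Real.pi/2 = Real.pi/2 + Real.pi by ring, Real.sin_add_pi,
      Real.sin_pi_div_two]
  have harg1 : (((2*(2*k+1):ℕ):ℝ)+1)*Real.pi/4 = 3*Real.pi/4 + (k:ℝ)*Real.pi := by
    push_cast; ring
  have harg2 : (((2*(2*k+1):ℕ):ℝ)+1)*Real.pi/2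
      = 3*Real.pi/2 + (k:ℝ)*(2*Real.pi) := by
    push_cast; ring
  have harg3 : (((2*(2*k+1):ℕ):ℝ)+1)/2 = ((2*k+1:ℕ):ℝ) + 1/2 := by
    push_cast; ring
  unfold fres
  rw [harg1, harg2, harg3, Real.cos_add_nat_mul_pi, hc,
    Real.sin_add_nat_mul_two_pi, hs, gamma_nat_add_half,
    pow_mul, fres_sq x t ht, mul_pow,
    Real.sqrt_mul (by norm_num : (0:ℝ) ≤ 2) Real.pi]
  have hf1 : (Nat.factorial (2*(2*k+1)) : ℝ) ≠ 0 :=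
    Nat.cast_ne_zero.mpr (2*(2*k+1)).factorial_ne_zero
  have hf2 : (Nat.factorial (2*k+1) : ℝ) ≠ 0 :=
    Nat.cast_ne_zero.mpr (2*k+1).factorial_ne_zero
  have h4 : (4:ℝ)^(2*k+1) ≠ 0 := by positivity
  field_simp

private lemma fres_tsum (x t : ℝ) (ht : 0 < t) :
    ∑' m : ℕ, fres x t m = Real.sqrt (2*Real.pi)/2 *
      (Real.cos (x^2/(2*t)) + Real.sin (x^2/(2*t))) := by
  set u : ℝ := x^2/(2*t) with hu
  have he : HasSum (fun k : ℕ => fres x t (2*(2*k)))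
      (Real.sqrt (2*Real.pi)/2 * Real.cos u) := by
    have h := (Real.hasSum_cos u).mul_left (Real.sqrt (2*Real.pi)/2)
    have heq : (fun k : ℕ => fres x t (2*(2*k)))
        = fun n : ℕ => Real.sqrt (2*Real.pi)/2 *
            ((-1)^n * u^(2*n) / ↑(Nat.factorial (2*n))) := by
      funext k; rw [hu]; exact fres_even x t ht k
    rw [heq]; exact h
  have ho : HasSum (fun k : ℕ => fres x t (2*(2*k+1)))
      (Real.sqrt (2*Real.pi)/2 * Real.sin u) := by
    have h := (Real.hasSum_sin u).mul_left (Real.sqrt (2*Real.pi)/2)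
    have heq : (fun k : ℕ => fres x t (2*(2*k+1)))
        = fun n : ℕ => Real.sqrt (2*Real.pi)/2 *
            ((-1)^n * u^(2*n+1) / ↑(Nat.factorial (2*n+1))) := by
      funext k; rw [hu]; exact fres_even_odd x t ht k
    rw [heq]; exact h
  have hcomb : HasSum (fun n : ℕ => fres x t (2*n))
      (Real.sqrt (2*Real.pi)/2 * Real.cos u + Real.sqrt (2*Real.pi)/2 * Real.sin u) :=
    HasSum.even_add_odd he ho
  have hinj : Function.Injective (fun n : ℕ => 2*n) := by
    intro a b h
    have h' : 2*a = 2*b := h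
    omega
  have hsupp : Function.support (fres x t) ⊆ Set.range (fun n : ℕ => 2*n) := by
    intro m hm
    rcases Nat.even_or_odd m with hme | hmo
    · obtain ⟨r, hr⟩ := hme
      exact ⟨r, show 2*r = m by omega⟩
    · obtain ⟨k, hk⟩ := hmo
      exact absurd (hk ▸ fres_odd x t k) hm
  rw [← hinj.tsum_eq hsupp, hcomb.tsum_eq]
  ring

theorem fractional_series_specializes_to_fresnel (x t : ℝ) (ht : 0 < t) :
    (1 / (Real.pi * Real.sqrt (2 * t))) *
        ∑' m : ℕ, (1 / Nat.factorial m : ℝ) *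
          (-Real.sqrt 2 * |x| / Real.sqrt t) ^ m *
          Real.cos ((m + 1) * Real.pi / 4) * Real.sin ((m + 1) * Real.pi / 2) *
          Real.Gamma ((m + 1) / 2) =
      (Real.sqrt (2 * Real.pi * t))⁻¹ * Real.cos (x ^ 2 / (2 * t) - Real.pi / 4) := by
  have key := fres_tsum x t ht
  have hgoal : (∑' m : ℕ, (1 / Nat.factorial m : ℝ) *
          (-Real.sqrt 2 * |x| / Real.sqrt t) ^ m *
          Real.cos ((m + 1) * Real.pi / 4) * Real.sin ((m + 1) * Real.pi / 2) *
          Real.Gamma ((m + 1) / 2)) = ∑' m : ℕ, fres x t m := rfl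
  rw [hgoal, key, Real.cos_sub, Real.cos_pi_div_four, Real.sin_pi_div_four]
  have e1 : Real.sqrt (2*Real.pi*t) = Real.sqrt 2 * Real.sqrt Real.pi * Real.sqrt t := by
    rw [Real.sqrt_mul (by positivity : (0:ℝ) ≤ 2*Real.pi),
      Real.sqrt_mul (by norm_num : (0:ℝ) ≤ 2)]
  have e2 : Real.sqrt (2*t) = Real.sqrt 2 * Real.sqrt t :=
    Real.sqrt_mul (by norm_num) t
  have e3 : Real.sqrt (2*Real.pi) = Real.sqrt 2 * Real.sqrt Real.pi :=
    Real.sqrt_mul (by norm_num) _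
  have e4 : (1:ℝ) / (Real.pi * (Real.sqrt 2 * Real.sqrt t))
      = 1 / (Real.sqrt Real.pi * Real.sqrt Real.pi * (Real.sqrt 2 * Real.sqrt t)) := by
    rw [Real.mul_self_sqrt Real.pi_pos.le]
  rw [e1, e2, e3, e4]
  have hs2 : Real.sqrt 2 ≠ 0 := ne_of_gt (Real.sqrt_pos.mpr (by norm_num))
  have hsp : Real.sqrt Real.pi ≠ 0 := ne_of_gt (Real.sqrt_pos.mpr Real.pi_pos)
  have hst : Real.sqrt t ≠ 0 := ne_of_gt (Real.sqrt_pos.mpr ht)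
  have hpi : Real.sqrt Real.pi ^ 2 = Real.pi := Real.sq_sqrt Real.pi_pos.le
  field_simp
end
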